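/- Let A be a Banach algebra satisfying A***·A** ⊆ A* (where the module action is induced by the first Arens product). Then A** has the I-w*w property: for each a'' ∈ A**, the map b'' ↦ a''b'' on A** is weak-star to weak continuous. Consequently, if A** is weakly amenable, then A is weakly amenable. -/

import Mathlib

set_option maxHeartbeats 1000000

namespace NormedSpace

/-- The topological dual of a seminormed space (Mathlib's former `NormedSpace.Dual`). -/
abbrev Dual (𝕜 : Type*) [NontriviallyNormedField 𝕜] (E : Type*) [SeminormedAddCommGroup E]
    [NormedSpace 𝕜 E] : Type _ :=
  E →L[𝕜] 𝕜

end NormedSpace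

open Filter Topology ContinuousLinearMap NormedSpace

noncomputable section ArensSetup

/-- The adjoint (transpose) of a continuous linear map between normed spaces. -/
def adjCLM {E F : Type*} [SeminormedAddCommGroup E] [NormedSpace ℝ E]
    [SeminormedAddCommGroup F] [NormedSpace ℝ F] (T : E →L[ℝ] F) :
    Dual ℝ F →L[ℝ] Dual ℝ E :=
  (ContinuousLinearMap.compL ℝ E F ℝ).flip T

@[simp] theorem adjCLM_apply {E F : Type*} [SeminormedAddCommGroup E] [NormedSpace ℝ E]
    [SeminormedAddCommGroup F] [NormedSpace ℝ F] (T : E →L[ℝ] F) (g : Dual ℝ F) (x : E) :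
    adjCLM T g x = g (T x) := rfl

/-- One-step Arens-type adjoint of a bounded bilinear map:
`ext1 β g' e = g' ∘ (β e)`. -/
def ext1 {E F G : Type*} [SeminormedAddCommGroup E] [NormedSpace ℝ E]
    [SeminormedAddCommGroup F] [NormedSpace ℝ F] [SeminormedAddCommGroup G] [NormedSpace ℝ G]
    (β : E →L[ℝ] F →L[ℝ] G) : Dual ℝ G →L[ℝ] E →L[ℝ] Dual ℝ F :=
  ((ContinuousLinearMap.compL ℝ F G ℝ).flip.comp β).flip

@[simp] theorem ext1_apply {E F G : Type*} [SeminormedAddCommGroup E] [NormedSpace ℝ E]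
    [SeminormedAddCommGroup F] [NormedSpace ℝ F] [SeminormedAddCommGroup G] [NormedSpace ℝ G]
    (β : E →L[ℝ] F →L[ℝ] G) (g' : Dual ℝ G) (e : E) (f : F) :
    ext1 β g' e f = g' (β e f) := rfl

/-- Triple adjoint: the (first) Arens extension of a bounded bilinear map to the
second duals. -/
def ext3 {E F G : Type*} [SeminormedAddCommGroup E] [NormedSpace ℝ E]
    [SeminormedAddCommGroup F] [NormedSpace ℝ F] [SeminormedAddCommGroup G] [NormedSpace ℝ G]
    (β : E →L[ℝ] F →L[ℝ] G) :
    Dual ℝ (Dual ℝ E) →L[ℝ] Dual ℝ (Dual ℝ F) →L[ℝ] Dual ℝ (Dual ℝ G) :=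
  ext1 (ext1 (ext1 β))

variable (A : Type*) [NonUnitalNormedRing A] [NormedSpace ℝ A]
  [SMulCommClass ℝ A A] [IsScalarTower ℝ A A] [CompleteSpace A]

/-- The first (left) Arens product on `A**`: `⟨a''b'', a'⟩ = ⟨a'', b''a'⟩`. -/
def fArens : Dual ℝ (Dual ℝ A) →L[ℝ] Dual ℝ (Dual ℝ A) →L[ℝ] Dual ℝ (Dual ℝ A) :=
  ext3 (ContinuousLinearMap.mul ℝ A)

/-- The second (right) Arens product on `A**`: `⟨a''∘b'', a'⟩ = ⟨b'', a'∘a''⟩`. -/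
def sArens : Dual ℝ (Dual ℝ A) →L[ℝ] Dual ℝ (Dual ℝ A) →L[ℝ] Dual ℝ (Dual ℝ A) :=
  (ext3 (ContinuousLinearMap.mul ℝ A).flip).flip

/-- `A` is Arens regular when the two Arens products on `A**` coincide. -/
def ArensRegular : Prop := fArens A = sArens A

variable {A}

/-- Weak-star to weak continuity for a map from the dual of `E` into `F`. -/
def WStarToWCont {E F : Type*} [SeminormedAddCommGroup E] [NormedSpace ℝ E]
    [SeminormedAddCommGroup F] [NormedSpace ℝ F] (f : Dual ℝ E → F) : Prop :=
  Continuous fun x : WeakDual ℝ E => toWeakSpace ℝ F (f (WeakDual.toStrongDual x))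

variable (A)

/-- The second adjoint `T'' : A** → A**` of `T : A → A`. -/
def secondAdj (T : A →L[ℝ] A) : Dual ℝ (Dual ℝ A) →L[ℝ] Dual ℝ (Dual ℝ A) :=
  adjCLM (adjCLM T)

/-- Left action of `A` on `A*`: `⟨a·a', b⟩ = ⟨a', ba⟩`. -/
def dualLeft : A →L[ℝ] Dual ℝ A →L[ℝ] Dual ℝ A :=
  (ext1 (ContinuousLinearMap.mul ℝ A).flip).flip

/-- Right action of `A` on `A*`: `⟨a'·a, b⟩ = ⟨a', ab⟩`. -/
def dualRight : Dual ℝ A →L[ℝ] A →L[ℝ] Dual ℝ A :=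
  ext1 (ContinuousLinearMap.mul ℝ A)

/-- Left action of `A**` (first Arens product) on `A***`. -/
def dualLeft2 : Dual ℝ (Dual ℝ A) →L[ℝ] Dual ℝ (Dual ℝ (Dual ℝ A)) →L[ℝ]
    Dual ℝ (Dual ℝ (Dual ℝ A)) :=
  (ext1 (fArens A).flip).flip

/-- Right action of `A**` (first Arens product) on `A***`. -/
def dualRight2 : Dual ℝ (Dual ℝ (Dual ℝ A)) →L[ℝ] Dual ℝ (Dual ℝ A) →L[ℝ]
    Dual ℝ (Dual ℝ (Dual ℝ A)) :=
  ext1 (fArens A)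

end ArensSetup

section BimoduleSetup

set_option maxHeartbeats 1000000

open Filter Topology ContinuousLinearMap NormedSpace

/-- A Banach `A`-bimodule: bounded bilinear left and right actions satisfying the
usual compatibility axioms. -/
structure BanachBimodule (A X : Type*) [NonUnitalNormedRing A] [NormedSpace ℝ A]
    [SMulCommClass ℝ A A] [IsScalarTower ℝ A A]
    [NormedAddCommGroup X] [NormedSpace ℝ X] [CompleteSpace X] where
  l : A →L[ℝ] X →L[ℝ] X
  r : X →L[ℝ] A →L[ℝ] X
  l_mul : ∀ a b x, l (a * b) x = l a (l b x)
  r_mul : ∀ x a b, r (r x a) b = r x (a * b)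
  l_r : ∀ a x b, l a (r x b) = r (l a x) b

variable {A X : Type*} [NonUnitalNormedRing A] [NormedSpace ℝ A]
  [SMulCommClass ℝ A A] [IsScalarTower ℝ A A] [CompleteSpace A]
  [NormedAddCommGroup X] [NormedSpace ℝ X] [CompleteSpace X]

/-- Left action of `A` on `X*`: `⟨a·f, x⟩ = ⟨f, x·a⟩`. -/
noncomputable def modDualLeft (M : BanachBimodule A X) : A →L[ℝ] Dual ℝ X →L[ℝ] Dual ℝ X :=
  (ext1 M.r.flip).flip

/-- Right action of `A` on `X*`: `⟨f·a, x⟩ = ⟨f, a·x⟩`. -/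
noncomputable def modDualRight (M : BanachBimodule A X) : Dual ℝ X →L[ℝ] A →L[ℝ] Dual ℝ X :=
  ext1 M.l

/-- Left action of `A**` on `X**` (first Arens extension). -/
noncomputable def modL2 (M : BanachBimodule A X) :
    Dual ℝ (Dual ℝ A) →L[ℝ] Dual ℝ (Dual ℝ X) →L[ℝ] Dual ℝ (Dual ℝ X) :=
  ext3 M.l

/-- Right action of `A**` on `X**` (first Arens extension); `modR2 M x'' a'' = x''a''`. -/
noncomputable def modR2 (M : BanachBimodule A X) :
    Dual ℝ (Dual ℝ X) →L[ℝ] Dual ℝ (Dual ℝ A) →L[ℝ] Dual ℝ (Dual ℝ X) :=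
  ext3 M.r

/-- Left action of `A**` on `X***`: `⟨a''·x''', x''⟩ = ⟨x''', x''a''⟩`. -/
noncomputable def modL3 (M : BanachBimodule A X) :
    Dual ℝ (Dual ℝ A) →L[ℝ] Dual ℝ (Dual ℝ (Dual ℝ X)) →L[ℝ] Dual ℝ (Dual ℝ (Dual ℝ X)) :=
  (ext1 (modR2 M).flip).flip

/-- Right action of `A**` on `X***`: `⟨x'''·a'', x''⟩ = ⟨x''', a''x''⟩`. -/
noncomputable def modR3 (M : BanachBimodule A X) :
    Dual ℝ (Dual ℝ (Dual ℝ X)) →L[ℝ] Dual ℝ (Dual ℝ A) →L[ℝ] Dual ℝ (Dual ℝ (Dual ℝ X)) :=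
  ext1 (modL2 M)

end BimoduleSetup

section DerivationSetup

variable {B Y : Type*} [SeminormedAddCommGroup B] [NormedSpace ℝ B]
  [SeminormedAddCommGroup Y] [NormedSpace ℝ Y]

/-- `D` is a derivation with respect to the multiplication `m` and the module
actions `l`, `r`. -/
def IsDeriv (m : B →L[ℝ] B →L[ℝ] B) (l : B →L[ℝ] Y →L[ℝ] Y)
    (r : Y →L[ℝ] B →L[ℝ] Y) (D : B →L[ℝ] Y) : Prop :=
  ∀ a b, D (m a b) = l a (D b) + r (D a) b

/-- `D` is an inner derivation: `D a = a·y − y·a` for some fixed `y`. -/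
def IsInner (l : B →L[ℝ] Y →L[ℝ] Y) (r : Y →L[ℝ] B →L[ℝ] Y) (D : B →L[ℝ] Y) : Prop :=
  ∃ y, ∀ a, D a = l a y - r y a

/-- `D` is a `T-S`-derivation: `D(ab) = T(a)·D(b) + D(a)·S(b)`. -/
def IsTSDeriv (m : B →L[ℝ] B →L[ℝ] B) (l : B →L[ℝ] Y →L[ℝ] Y)
    (r : Y →L[ℝ] B →L[ℝ] Y) (T S : B →L[ℝ] B) (D : B →L[ℝ] Y) : Prop :=
  ∀ a b, D (m a b) = l (T a) (D b) + r (D a) (S b)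

/-- `D` is an inner `T-S`-derivation: `D a = T(a)·y − y·S(a)` for some fixed `y`. -/
def IsTSInner (l : B →L[ℝ] Y →L[ℝ] Y) (r : Y →L[ℝ] B →L[ℝ] Y)
    (T S : B →L[ℝ] B) (D : B →L[ℝ] Y) : Prop :=
  ∃ y, ∀ a, D a = l (T a) y - r y (S a)

end DerivationSetup


section Statements
set_option maxHeartbeats 1000000
open Filter Topology ContinuousLinearMap NormedSpace

variable {A : Type*} [NonUnitalNormedRing A] [NormedSpace ℝ A]
  [SMulCommClass ℝ A A] [IsScalarTower ℝ A A] [CompleteSpace A]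

private lemma beta2_incl (a : A) (f : Dual ℝ A) :
    ext1 (ext1 (ContinuousLinearMap.mul ℝ A)) (inclusionInDoubleDual ℝ A a) f
      = dualLeft A a f := by
  ext x; rfl

private lemma arens_incl (a b : A) :
    fArens A (inclusionInDoubleDual ℝ A a) (inclusionInDoubleDual ℝ A b)
      = inclusionInDoubleDual ℝ A (a * b) := by
  ext f; rfl

/-- If `A***·A** ⊆ A*`, then `A**` has the `I-w*w` property; consequently weak
amenability of `A**` implies weak amenability of `A`. -/
theorem Iwsw_of_tripleDual_prod
    (hsub : ∀ (c : Dual ℝ (Dual ℝ (Dual ℝ A))) (a'' : Dual ℝ (Dual ℝ A)), ∃ a' : Dual ℝ A,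
      c.comp (fArens A a'') = inclusionInDoubleDual ℝ (Dual ℝ A) a') :
    (∀ a'' : Dual ℝ (Dual ℝ A), WStarToWCont (fun b'' => fArens A a'' b'')) ∧
    ((∀ G : Dual ℝ (Dual ℝ A) →L[ℝ] Dual ℝ (Dual ℝ (Dual ℝ A)),
        IsDeriv (fArens A) (dualLeft2 A) (dualRight2 A) G →
        IsInner (dualLeft2 A) (dualRight2 A) G) →
      ∀ D : A →L[ℝ] Dual ℝ A,
        IsDeriv (ContinuousLinearMap.mul ℝ A) (dualLeft A) (dualRight A) D →
        IsInner (dualLeft A) (dualRight A) D) := by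
  constructor
  · intro a''
    refine WeakBilin.continuous_of_continuous_eval _ fun c => ?_
    obtain ⟨a', ha'⟩ := hsub c a''
    have h1 : (fun x : WeakDual ℝ (Dual ℝ A) =>
        c (fArens A a'' (WeakDual.toStrongDual x)))
        = fun x : WeakDual ℝ (Dual ℝ A) => (WeakDual.toStrongDual x) a' := by
      funext x
      exact ContinuousLinearMap.ext_iff.mp ha' (WeakDual.toStrongDual x)
    show Continuous fun x : WeakDual ℝ (Dual ℝ A) =>
      c (fArens A a'' (WeakDual.toStrongDual x))
    rw [h1]
    exact WeakBilin.eval_continuous _ a'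
  · intro hG D hD
    have hder : IsDeriv (fArens A) (dualLeft2 A) (dualRight2 A) (adjCLM (adjCLM D)) := by
      intro u v
      ext w
      obtain ⟨a', ha'⟩ := hsub (v.comp (adjCLM D)) w
      have key : ext1 (ext1 (ContinuousLinearMap.mul ℝ A)) v (adjCLM D w)
          = a' + adjCLM D (fArens A v w) := by
        ext a
        have h1 : v (adjCLM D (fArens A w (inclusionInDoubleDual ℝ A a))) = a' a :=
          ContinuousLinearMap.ext_iff.mp ha' (inclusionInDoubleDual ℝ A a)
        have hsum : dualRight A (adjCLM D w) a
            = adjCLM D (fArens A w (inclusionInDoubleDual ℝ A a))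
              + ext1 (ext1 (ContinuousLinearMap.mul ℝ A)) w (D a) := by
          ext b
          have hDab := hD a b
          show w (D (a * b)) = adjCLM D (fArens A w (inclusionInDoubleDual ℝ A a)) b
              + ext1 (ext1 (ContinuousLinearMap.mul ℝ A)) w (D a) b
          have e1 : adjCLM D (fArens A w (inclusionInDoubleDual ℝ A a)) b
              = w (dualLeft A a (D b)) := by
            show w (ext1 (ext1 (ContinuousLinearMap.mul ℝ A))
              (inclusionInDoubleDual ℝ A a) (D b)) = _
            rw [beta2_incl]
          have e2 : ext1 (ext1 (ContinuousLinearMap.mul ℝ A)) w (D a) b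
              = w (dualRight A (D a) b) := rfl
          rw [e1, e2, ← map_add, ← hDab]
          rfl
        show v (dualRight A (adjCLM D w) a)
            = a' a + v (ext1 (ext1 (ContinuousLinearMap.mul ℝ A)) w (D a))
        rw [hsum, map_add, h1]
      show u (ext1 (ext1 (ContinuousLinearMap.mul ℝ A)) v (adjCLM D w))
          = v (adjCLM D (fArens A w u)) + u (adjCLM D (fArens A v w))
      rw [key, map_add]
      congr 1
      exact (ContinuousLinearMap.ext_iff.mp ha' u).symm
    obtain ⟨c, hc⟩ := hG _ hder
    refine ⟨c.comp (inclusionInDoubleDual ℝ A), ?_⟩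
    intro a
    ext b
    have h := ContinuousLinearMap.ext_iff.mp (hc (inclusionInDoubleDual ℝ A a))
      (inclusionInDoubleDual ℝ A b)
    show (adjCLM (adjCLM D)) (inclusionInDoubleDual ℝ A a) (inclusionInDoubleDual ℝ A b) = _
    rw [h]
    show c (fArens A (inclusionInDoubleDual ℝ A b) (inclusionInDoubleDual ℝ A a))
        - c (fArens A (inclusionInDoubleDual ℝ A a) (inclusionInDoubleDual ℝ A b)) = _
    rw [arens_incl, arens_incl]
    rfl


end Statements
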